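/- The function $e_1 \mapsto J_+(e_1,0) = \int_0^1 \frac{\sqrt{e_1}\,g\,dg}{\sqrt{\frac{2}{3}(1-g)g(g+6/e_1+1)}}$ is strictly increasing on $(0,\infty)$. -/

import Mathlib

open Real Set

private lemma Jplus_integrable {e : ℝ} (he : 0 < e) :
    IntervalIntegrable
      (fun g : ℝ => Real.sqrt e * g / Real.sqrt ((2/3) * (1 - g) * g * (g + 6/e + 1)))
      MeasureTheory.volume 0 1 := by
  have hbound : IntervalIntegrable
      (fun x : ℝ => (e/2) * (1 - x) ^ (-(1/2) : ℝ)) MeasureTheory.volume 0 1 := by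
    have h1 : IntervalIntegrable (fun x : ℝ => x ^ (-(1/2) : ℝ)) MeasureTheory.volume 0 1 :=
      intervalIntegral.intervalIntegrable_rpow' (by norm_num)
    have h2 := h1.comp_sub_left 1
    simpa using (h2.const_mul (e/2)).symm
  rw [intervalIntegrable_iff_integrableOn_Ioc_of_le (by norm_num)] at hbound ⊢
  refine hbound.mono' ?_ ?_
  · apply Measurable.aestronglyMeasurable
    fun_prop
  · filter_upwards [MeasureTheory.ae_restrict_mem measurableSet_Ioc] with x hx
    obtain ⟨hx0, hx1⟩ := hx
    rcases eq_or_lt_of_le hx1 with h1 | h1x'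
    · simp [h1]
    have h1x : 0 < 1 - x := by linarith
    have h6 : 0 < 6 / e := by positivity
    have hD : 0 < (2/3) * (1 - x) * x * (x + 6/e + 1) := by
      apply mul_pos (mul_pos (mul_pos (by norm_num) h1x) hx0)
      linarith
    have hfnn : 0 ≤ Real.sqrt e * x / Real.sqrt ((2/3) * (1 - x) * x * (x + 6/e + 1)) := by
      apply div_nonneg (mul_nonneg (Real.sqrt_nonneg _) hx0.le) (Real.sqrt_nonneg _)
    rw [Real.norm_eq_abs, abs_of_nonneg hfnn]
    have hrw : (1 - x) ^ (-(1/2) : ℝ) = (Real.sqrt (1 - x))⁻¹ := by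
      rw [Real.rpow_neg h1x.le, ← Real.sqrt_eq_rpow]
    rw [hrw]
    have hbnn : 0 ≤ (e/2) * (Real.sqrt (1 - x))⁻¹ := by positivity
    refine le_of_pow_le_pow_left₀ two_ne_zero hbnn ?_
    rw [div_pow, mul_pow, mul_pow, Real.sq_sqrt he.le, Real.sq_sqrt hD.le, inv_pow,
      Real.sq_sqrt h1x.le, ← div_eq_mul_inv, div_le_div_iff₀ hD h1x]
    have hexp : (e/2)^2 * ((2/3) * (1 - x) * x * (x + 6/e + 1))
        = e^2/6 * ((1 - x) * x * (x + 1)) + e * ((1 - x) * x) := by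
      field_simp
      ring
    rw [hexp]
    nlinarith [mul_nonneg (mul_nonneg he.le hx0.le) (sq_nonneg (1 - x)),
      mul_nonneg (mul_nonneg (mul_nonneg (by positivity : (0:ℝ) ≤ e^2/6) h1x.le) hx0.le)
        (by linarith : (0:ℝ) ≤ x + 1)]

/-- The flux functional `e1 ↦ J₊(e1, 0)` is strictly increasing on `(0, ∞)`. -/
theorem Jplus_zero_strictMonoOn :
    StrictMonoOn
      (fun e1 : ℝ =>
        ∫ g in (0:ℝ)..1,
          Real.sqrt e1 * g / Real.sqrt ((2/3) * (1 - g) * g * (g + 6/e1 + 1)))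
      (Set.Ioi 0) := by
  intro a ha b hb hab
  simp only [Set.mem_Ioi] at ha hb
  have hIa := Jplus_integrable ha
  have hIb := Jplus_integrable hb
  have hpt : ∀ x : ℝ, x ∈ Set.Ioo (0:ℝ) 1 →
      0 < Real.sqrt b * x / Real.sqrt ((2/3) * (1 - x) * x * (x + 6/b + 1))
        - Real.sqrt a * x / Real.sqrt ((2/3) * (1 - x) * x * (x + 6/a + 1)) := by
    intro x hx
    obtain ⟨hx0, hx1⟩ := hx
    have h1x : 0 < 1 - x := by linarith
    have h6a : 0 < 6 / a := by positivity
    have h6b : 0 < 6 / b := by positivity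
    have hDb : 0 < (2/3) * (1 - x) * x * (x + 6/b + 1) := by
      apply mul_pos (mul_pos (mul_pos (by norm_num) h1x) hx0); linarith
    have h6 : 6 / b ≤ 6 / a := by
      rw [div_le_div_iff₀ hb ha]; nlinarith
    have hDle : (2/3) * (1 - x) * x * (x + 6/b + 1) ≤ (2/3) * (1 - x) * x * (x + 6/a + 1) := by
      apply mul_le_mul_of_nonneg_left (by linarith)
      have : (0:ℝ) ≤ 2/3 := by norm_num
      nlinarith
    have hlt : Real.sqrt a * x / Real.sqrt ((2/3) * (1 - x) * x * (x + 6/a + 1))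
        < Real.sqrt b * x / Real.sqrt ((2/3) * (1 - x) * x * (x + 6/b + 1)) := by
      apply div_lt_div₀
      · exact mul_lt_mul_of_pos_right (Real.sqrt_lt_sqrt ha.le hab) hx0
      · exact Real.sqrt_le_sqrt hDle
      · positivity
      · exact Real.sqrt_pos.mpr hDb
    linarith
  have h := intervalIntegral.intervalIntegral_pos_of_pos_on (hIb.sub hIa) hpt (by norm_num)
  rw [intervalIntegral.integral_sub hIb hIa] at h
  simp only []
  linarith
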